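/- Let f be smooth, monotone (fᵢ > 0) and concave on an open symmetric convex cone Γ, with f continuous up to the closure. If μ ∈ Γ, then for every ε > 0 sufficiently small and every R large enough, the vector (μ₁ − ε, …, μ_{n−1} − ε, R) belongs to Γ and f(μ₁ − ε, …, μ_{n−1} − ε, R) ≥ f(μ), provided lim_{t→∞} f(tλ) > f(ν) for all λ, ν ∈ Γ and (μ₁−ε,…,μ_{n−1}−ε) ∈ Γ_∞. -/
import Mathlib


open Filter

section Aux

variable {n : ℕ} {Γ : Set (Fin (n + 1) → ℝ)} {f : (Fin (n + 1) → ℝ) → ℝ}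

private lemma aux_add_mem (hconv : Convex ℝ Γ)
    (hcone : ∀ x ∈ Γ, ∀ t : ℝ, 0 < t → t • x ∈ Γ) {a b : Fin (n + 1) → ℝ}
    (ha : a ∈ Γ) (hb : b ∈ Γ) : a + b ∈ Γ := by
  have h := hconv ha hb (by norm_num : (0:ℝ) ≤ 1/2) (by norm_num : (0:ℝ) ≤ 1/2)
    (by norm_num : (1:ℝ)/2 + 1/2 = 1)
  have h2 := hcone _ h 2 (by norm_num)
  convert h2 using 1
  module

private lemma aux_ray (hopen : IsOpen Γ) (hconv : Convex ℝ Γ)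
    (hcone : ∀ x ∈ Γ, ∀ t : ℝ, 0 < t → t • x ∈ Γ)
    (hpos : {x : Fin (n + 1) → ℝ | ∀ i, 0 < x i} ⊆ Γ)
    {x : Fin (n + 1) → ℝ} (hx : x ∈ Γ) {s : ℝ} (hs : 0 ≤ s) :
    x + s • (Pi.single (Fin.last n) (1:ℝ) : Fin (n + 1) → ℝ) ∈ Γ := by
  obtain ⟨r, hr, hball⟩ := Metric.isOpen_iff.1 hopen x hx
  set one : Fin (n + 1) → ℝ := fun _ => 1 with hone
  have hnorm1 : ‖one‖ ≤ 1 := by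
    apply (pi_norm_le_iff_of_nonneg (by norm_num)).2
    intro i
    simp [hone]
  set δ := r / 2 with hδ
  have hδpos : 0 < δ := by positivity
  have hx' : x - δ • one ∈ Γ := by
    apply hball
    have hd : dist (x - δ • one) x = ‖δ • one‖ := by
      rw [dist_eq_norm, sub_sub_cancel_left, norm_neg]
    rw [Metric.mem_ball, hd]
    have : ‖δ • one‖ = δ * ‖one‖ := by
      rw [norm_smul, Real.norm_of_nonneg hδpos.le]
    rw [this]
    nlinarith
  have hv : (s • (Pi.single (Fin.last n) (1:ℝ) : Fin (n + 1) → ℝ) + δ • one) ∈ Γ := by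
    apply hpos
    intro i
    simp only [Pi.add_apply, Pi.smul_apply, smul_eq_mul, hone]
    rcases eq_or_ne i (Fin.last n) with h | h
    · rw [h, Pi.single_eq_same]
      nlinarith
    · rw [Pi.single_eq_of_ne h]
      nlinarith
  have hsum := aux_add_mem hconv hcone hx' hv
  convert hsum using 1
  module

private lemma aux_mono (hopen : IsOpen Γ) (hconv : Convex ℝ Γ)
    (hcone : ∀ x ∈ Γ, ∀ t : ℝ, 0 < t → t • x ∈ Γ)
    (hpos : {x : Fin (n + 1) → ℝ | ∀ i, 0 < x i} ⊆ Γ)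
    (hdiff : ∀ x ∈ Γ, DifferentiableAt ℝ f x)
    (hmono : ∀ x ∈ Γ, ∀ i, 0 < fderiv ℝ f x (Pi.single i 1))
    {x : Fin (n + 1) → ℝ} (hx : x ∈ Γ) {s : ℝ} (hs : 0 < s) :
    f x < f (x + s • (Pi.single (Fin.last n) (1:ℝ) : Fin (n + 1) → ℝ)) := by
  set e : Fin (n + 1) → ℝ := Pi.single (Fin.last n) (1:ℝ) with he
  have hmem : ∀ t : ℝ, 0 ≤ t → x + t • e ∈ Γ := fun t ht =>
    aux_ray hopen hconv hcone hpos hx ht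
  have hderiv : ∀ t : ℝ, 0 ≤ t →
      HasDerivAt (fun u : ℝ => f (x + u • e)) (fderiv ℝ f (x + t • e) e) t := by
    intro t ht
    have h1 : HasDerivAt (fun u : ℝ => x + u • e) e t := by
      simpa using ((hasDerivAt_id t).smul_const e).const_add x
    exact (hdiff _ (hmem t ht)).hasFDerivAt.comp_hasDerivAt t h1
  have hsm : StrictMonoOn (fun u : ℝ => f (x + u • e)) (Set.Icc 0 s) := by
    apply strictMonoOn_of_deriv_pos (convex_Icc 0 s)
    · intro t ht
      exact (hderiv t ht.1).continuousAt.continuousWithinAt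
    · intro t ht
      rw [interior_Icc] at ht
      rw [(hderiv t ht.1.le).deriv]
      exact hmono _ (hmem t ht.1.le) (Fin.last n)
  have h := hsm (Set.left_mem_Icc.2 hs.le) (Set.right_mem_Icc.2 hs.le) hs
  simpa using h

end Aux

/-- Step 1 of the pure normal derivative estimate: for `f` smooth, monotone, concave on the
open symmetric convex cone `Γ ⊂ ℝ^{n+1}`, continuous up to the closure, satisfying
`lim_{t→∞} f(tλ) > f(ν)` for all `λ, ν ∈ Γ`, and `μ ∈ Γ`: for all sufficiently small `ε > 0`,
provided `(μ₁−ε,…,μ_n−ε) ∈ Γ_∞`, there is `R₀` such that for every `R ≥ R₀` the vector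
`(μ₁−ε,…,μ_n−ε,R)` lies in `Γ` and `f(μ₁−ε,…,μ_n−ε,R) ≥ f(μ)`. -/
theorem stmt19 {n : ℕ} (Γ : Set (Fin (n + 1) → ℝ)) (f : (Fin (n + 1) → ℝ) → ℝ)
    (hopen : IsOpen Γ) (hconv : Convex ℝ Γ)
    (hcone : ∀ x ∈ Γ, ∀ t : ℝ, 0 < t → t • x ∈ Γ)
    (hsymm : ∀ x ∈ Γ, ∀ σ : Equiv.Perm (Fin (n + 1)), x ∘ σ ∈ Γ)
    (hpos : {x : Fin (n + 1) → ℝ | ∀ i, 0 < x i} ⊆ Γ)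
    (hcont : ContinuousOn f (closure Γ))
    (hdiff : ∀ x ∈ Γ, DifferentiableAt ℝ f x)
    (hmono : ∀ x ∈ Γ, ∀ i, 0 < fderiv ℝ f x (Pi.single i 1))
    (hconc : ConcaveOn ℝ Γ f)
    (hlim : ∀ lam ∈ Γ, ∀ nu ∈ Γ,
        (f nu : EReal) < Filter.limsup (fun t : ℝ => (f (t • lam) : EReal)) atTop)
    (mu : Fin (n + 1) → ℝ) (hmu : mu ∈ Γ) :
    ∃ ε₀ : ℝ, 0 < ε₀ ∧ ∀ ε : ℝ, 0 < ε → ε ≤ ε₀ →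
      ((fun i : Fin n => mu i.castSucc - ε) ∈
          {x : Fin n → ℝ | ∃ t : ℝ, Fin.snoc x t ∈ Γ}) →
        ∃ R₀ : ℝ, ∀ R ≥ R₀,
          (Fin.snoc (fun i : Fin n => mu i.castSucc - ε) R : Fin (n + 1) → ℝ) ∈ Γ ∧
          f mu ≤ f (Fin.snoc (fun i : Fin n => mu i.castSucc - ε) R) := by
  classical
  set e : Fin (n + 1) → ℝ := Pi.single (Fin.last n) (1:ℝ) with he
  set R₁ : ℝ := mu (Fin.last n) + 1 with hR₁
  set z₀ : Fin (n + 1) → ℝ := mu + e with hz₀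
  have hz₀eq : z₀ = mu + (1:ℝ) • e := by rw [one_smul]
  have hz₀Γ : z₀ ∈ Γ := by
    rw [hz₀eq]
    exact aux_ray hopen hconv hcone hpos hmu zero_le_one
  have hfz₀ : f mu < f z₀ := by
    rw [hz₀eq]
    exact aux_mono hopen hconv hcone hpos hdiff hmono hmu one_pos
  set u : Fin (n + 1) → ℝ := Fin.snoc (fun _ => (1:ℝ)) 0 with hu
  have hcΓ : ContinuousOn f Γ := hcont.mono subset_closure
  have hUopen : IsOpen (Γ ∩ f ⁻¹' Set.Ioi (f mu)) :=
    hcΓ.isOpen_inter_preimage hopen isOpen_Ioi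
  have hz₀U : z₀ ∈ Γ ∩ f ⁻¹' Set.Ioi (f mu) := ⟨hz₀Γ, hfz₀⟩
  have hcontc : Continuous (fun ε : ℝ => z₀ - ε • u) := by
    exact continuous_const.sub (continuous_id.smul continuous_const)
  have hnhds : (fun ε : ℝ => z₀ - ε • u) ⁻¹' (Γ ∩ f ⁻¹' Set.Ioi (f mu)) ∈ nhds (0:ℝ) := by
    apply hcontc.continuousAt.preimage_mem_nhds
    rw [show z₀ - (0:ℝ) • u = z₀ by simp]
    exact hUopen.mem_nhds hz₀U
  obtain ⟨δ, hδpos, hδ⟩ := Metric.mem_nhds_iff.1 hnhds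
  refine ⟨δ / 2, by positivity, ?_⟩
  intro ε hε hεle _hGinf
  have hzε : z₀ - ε • u ∈ Γ ∩ f ⁻¹' Set.Ioi (f mu) := by
    apply hδ
    rw [Metric.mem_ball, Real.dist_eq, sub_zero, abs_of_pos hε]
    linarith
  refine ⟨R₁, ?_⟩
  intro R hR
  have keyR : (Fin.snoc (fun i : Fin n => mu i.castSucc - ε) R : Fin (n + 1) → ℝ)
      = (z₀ - ε • u) + (R - R₁) • e := by
    funext i
    refine Fin.lastCases ?_ ?_ i
    · simp only [Fin.snoc_last, hz₀, hu, he, hR₁, Pi.sub_apply, Pi.add_apply,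
        Pi.smul_apply, Pi.single_eq_same, smul_eq_mul]
      ring
    · intro j
      simp [hz₀, hu, he, Pi.single_eq_of_ne (Fin.castSucc_lt_last j).ne]
  rw [keyR]
  have hfzε : f mu < f (z₀ - ε • u) := hzε.2
  constructor
  · exact aux_ray hopen hconv hcone hpos hzε.1 (by linarith)
  · rcases eq_or_lt_of_le hR with h | h
    · rw [← h]
      simpa using hfzε.le
    · exact (lt_trans hfzε
        (aux_mono hopen hconv hcone hpos hdiff hmono hzε.1 (by linarith))).le
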